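/- Let A be an m×n real matrix whose rows a₁ᵀ,…,aₘᵀ are linearly independent (A has full row rank), and let b ∈ ℝᵐ. Let G be a connected undirected simple graph on m vertices with Laplacian L, let Pᵢ = I − aᵢaᵢᵀ/(aᵢᵀaᵢ) for i = 1,…,m, let P = diag(P₁,…,Pₘ) be the mn×mn block-diagonal matrix and L̄ = L ⊗ Iₙ. Then for every initial vector 𝒳₀ = (x₁(0),…,xₘ(0)) ∈ (ℝⁿ)ᵐ with aᵢᵀxᵢ(0) = bᵢ for all i, there exist x ∈ ℝⁿ with Ax = b and constants C ≥ 0, c > 0 such that for all t ≥ 0, ‖exp(−t·P L̄)·𝒳₀ − (x,x,…,x)‖ ≤ C·exp(−c·t). -/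

import Mathlib

open Matrix
open scoped Kronecker

/-- The orthogonal projection `Pᵢ = I - aᵢaᵢᵀ/(aᵢᵀaᵢ)` onto the hyperplane `{z : aᵢᵀz = 0}`. -/
noncomputable def projMat {n : ℕ} (a : Fin n → ℝ) : Matrix (Fin n) (Fin n) ℝ :=
  1 - (a ⬝ᵥ a)⁻¹ • vecMulVec a a

/-- The block-diagonal matrix `P = diag(P₁,…,Pₘ)`, acting on `(ℝⁿ)ᵐ ≅ ℝ^{mn}`
(indexed by pairs `(block, coordinate)`). -/
noncomputable def blockP {m n : ℕ} (a : Fin m → Fin n → ℝ) :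
    Matrix (Fin m × Fin n) (Fin m × Fin n) ℝ :=
  Matrix.of fun p q => if p.1 = q.1 then projMat (a p.1) p.2 q.2 else 0

open NormedSpace

section Lemmas
variable {m n : ℕ}

lemma vecMulVec_mulVec' (a b y : Fin n → ℝ) : vecMulVec a b *ᵥ y = (b ⬝ᵥ y) • a := by
  funext i
  simp only [vecMulVec, mulVec, dotProduct, Matrix.of_apply, Pi.smul_apply, smul_eq_mul,
    Finset.mul_sum]
  rw [Finset.sum_mul]
  exact Finset.sum_congr rfl fun j _ => by ring

lemma projMat_mulVec (a y : Fin n → ℝ) :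
    projMat a *ᵥ y = y - ((a ⬝ᵥ a)⁻¹ * (a ⬝ᵥ y)) • a := by
  simp [projMat, Matrix.sub_mulVec, Matrix.smul_mulVec, vecMulVec_mulVec', smul_smul]

lemma dotProduct_projMat_mulVec (a y : Fin n → ℝ) (ha : a ≠ 0) :
    a ⬝ᵥ (projMat a *ᵥ y) = 0 := by
  have haa : a ⬝ᵥ a ≠ 0 := by
    simpa [dotProduct_self_eq_zero] using ha
  rw [projMat_mulVec]
  simp only [dotProduct_sub, dotProduct_smul, smul_eq_mul]
  field_simp
  ring

lemma projMat_mulVec_of_dot_eq_zero (a y : Fin n → ℝ) (h : a ⬝ᵥ y = 0) :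
    projMat a *ᵥ y = y := by
  rw [projMat_mulVec, h]
  simp

lemma blockP_mulVec (a : Fin m → Fin n → ℝ) (v : Fin m × Fin n → ℝ) (i : Fin m) (k : Fin n) :
    (blockP a *ᵥ v) (i, k) = (projMat (a i) *ᵥ fun l => v (i, l)) k := by
  simp only [blockP, Matrix.mulVec, dotProduct, Matrix.of_apply]
  rw [Fintype.sum_prod_type]
  rw [Finset.sum_eq_single i]
  · simp
  · intro j _ hj
    simp [Ne.symm hj]
  · simp

lemma blockP_idem (a : Fin m → Fin n → ℝ) (ha : ∀ i, a i ≠ 0) (v : Fin m × Fin n → ℝ) :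
    blockP a *ᵥ (blockP a *ᵥ v) = blockP a *ᵥ v := by
  funext p
  obtain ⟨i, k⟩ := p
  rw [blockP_mulVec]
  have h2 : (fun l => (blockP a *ᵥ v) (i, l)) = projMat (a i) *ᵥ fun l => v (i, l) := by
    funext l; rw [blockP_mulVec]
  conv_lhs => rw [h2]
  rw [blockP_mulVec,
    projMat_mulVec_of_dot_eq_zero _ _ (dotProduct_projMat_mulVec (a i) _ (ha i))]

lemma blockP_dot (a : Fin m → Fin n → ℝ) (ha : ∀ i, a i ≠ 0) (v : Fin m × Fin n → ℝ)
    (i : Fin m) : a i ⬝ᵥ (fun k => (blockP a *ᵥ v) (i, k)) = 0 := by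
  have : (fun k => (blockP a *ᵥ v) (i, k)) = projMat (a i) *ᵥ fun l => v (i, l) := by
    funext k; rw [blockP_mulVec]
  rw [this]
  exact dotProduct_projMat_mulVec _ _ (ha i)

lemma blockP_fixed (a : Fin m → Fin n → ℝ) (v : Fin m × Fin n → ℝ)
    (h : ∀ i, a i ⬝ᵥ (fun k => v (i, k)) = 0) : blockP a *ᵥ v = v := by
  funext p
  obtain ⟨i, k⟩ := p
  rw [blockP_mulVec, projMat_mulVec_of_dot_eq_zero _ _ (h i)]

lemma projMat_transpose (a : Fin n → ℝ) : (projMat a)ᵀ = projMat a := by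
  funext k l
  show projMat a l k = projMat a k l
  simp only [projMat, Matrix.sub_apply, Pi.smul_apply, Matrix.smul_apply, vecMulVec_apply, one_apply,
    smul_eq_mul]
  rw [mul_comm (a l) (a k)]
  by_cases h : k = l
  · subst h; rfl
  · rw [if_neg h, if_neg (Ne.symm h)]

lemma projMat_apply_symm (a : Fin n → ℝ) (k l : Fin n) :
    projMat a k l = projMat a l k := by
  conv_rhs => rw [← projMat_transpose a]
  rfl

lemma blockP_conjTranspose (a : Fin m → Fin n → ℝ) : (blockP a)ᴴ = blockP a := by
  funext p q
  obtain ⟨i, k⟩ := p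
  obtain ⟨j, l⟩ := q
  simp only [conjTranspose_apply, blockP, Matrix.of_apply, star_trivial]
  by_cases h : i = j
  · subst h
    simp [projMat_apply_symm]
  · simp [h, Ne.symm h]

end Lemmas

section ExpMulVec

variable {ι : Type*} [Fintype ι] [DecidableEq ι]

/-- mulVec as a linear map in the matrix argument. -/
noncomputable def mulVecRight (v : ι → ℝ) : Matrix ι ι ℝ →ₗ[ℝ] (ι → ℝ) where
  toFun B := B *ᵥ v
  map_add' B C := Matrix.add_mulVec B C v
  map_smul' c B := Matrix.smul_mulVec c B v

lemma exp_mulVec_eq_tsum (A : Matrix ι ι ℝ) (v : ι → ℝ) :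
    exp A *ᵥ v = ∑' k : ℕ, ((k.factorial : ℝ)⁻¹) • (A ^ k *ᵥ v) := by
  letI : SeminormedRing (Matrix ι ι ℝ) := Matrix.linftyOpSemiNormedRing
  letI : NormedRing (Matrix ι ι ℝ) := Matrix.linftyOpNormedRing
  letI : NormedAlgebra ℝ (Matrix ι ι ℝ) := Matrix.linftyOpNormedAlgebra
  have hs : Summable fun k : ℕ => ((k.factorial : ℝ)⁻¹) • A ^ k :=
    expSeries_summable' (𝕂 := ℝ) A
  have := ((mulVecRight (ι := ι) v).toContinuousLinearMap).map_tsum hs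
  rw [exp_eq_tsum ℝ]
  simpa [mulVecRight, Matrix.smul_mulVec] using this

lemma exp_mulVec_eq_self {A : Matrix ι ι ℝ} {v : ι → ℝ} (h : A *ᵥ v = 0) :
    exp A *ᵥ v = v := by
  rw [exp_mulVec_eq_tsum, tsum_eq_single 0]
  · simp
  · intro k hk
    obtain ⟨k, rfl⟩ := Nat.exists_eq_succ_of_ne_zero hk
    rw [pow_succ, ← Matrix.mulVec_mulVec, h, Matrix.mulVec_zero, smul_zero]

lemma exp_mulVec_congr {A B : Matrix ι ι ℝ} {v : ι → ℝ}
    (h : ∀ k : ℕ, A ^ k *ᵥ v = B ^ k *ᵥ v) :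
    exp A *ᵥ v = exp B *ᵥ v := by
  rw [exp_mulVec_eq_tsum, exp_mulVec_eq_tsum]
  exact tsum_congr fun k => by rw [h k]

end ExpMulVec

section Decay
variable {ι : Type*} [Fintype ι] [DecidableEq ι]

lemma psd_exp_decay (S : Matrix ι ι ℝ) (hS : S.PosSemidef) (Y : ι → ℝ)
    (hY : ∀ Z : ι → ℝ, S *ᵥ Z = 0 → Z ⬝ᵥ Y = 0) :
    ∃ C c : ℝ, 0 ≤ C ∧ 0 < c ∧ ∀ t : ℝ, 0 ≤ t →
      ‖exp ((-t) • S) *ᵥ Y‖ ≤ C * Real.exp (-c * t) := by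
  have hH : S.IsHermitian := hS.1
  set U : Matrix ι ι ℝ := (hH.eigenvectorUnitary : Matrix ι ι ℝ) with hU
  set ev : ι → ℝ := hH.eigenvalues with hev
  have hUU : U * star U = 1 := (Matrix.mem_unitaryGroup_iff).mp hH.eigenvectorUnitary.2
  have hUU' : star U * U = 1 := (Matrix.mem_unitaryGroup_iff').mp hH.eigenvectorUnitary.2
  have hUunit : IsUnit U := ⟨⟨U, star U, hUU, hUU'⟩, rfl⟩
  have hUinv : U⁻¹ = star U := Matrix.inv_eq_left_inv hUU'
  have hspec : S = U * Matrix.diagonal ev * star U := by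
    have := hH.spectral_theorem
    simpa using this
  have hevnn : ∀ i, 0 ≤ ev i := hS.eigenvalues_nonneg
  -- decay rate: minimum positive eigenvalue
  set vals : Finset ℝ := (Finset.univ.filter (fun i => 0 < ev i)).image ev with hvals
  set c : ℝ := if h : vals.Nonempty then vals.min' h else 1 with hc
  have hcpos : 0 < c := by
    rw [hc]
    split_ifs with h
    · obtain ⟨i, hi, hie⟩ := Finset.mem_image.mp (vals.min'_mem h)
      exact hie ▸ (Finset.mem_filter.mp hi).2
    · exact one_pos
  have hcle : ∀ i, 0 < ev i → c ≤ ev i := by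
    intro i hi
    have hmem : ev i ∈ vals := Finset.mem_image_of_mem ev (by simp [hi])
    rw [hc]
    rw [dif_pos ⟨_, hmem⟩]
    exact Finset.min'_le _ _ hmem
  -- w = (star U) *ᵥ Y; components with zero eigenvalue vanish
  set w : ι → ℝ := star U *ᵥ Y with hw
  have hwzero : ∀ i, ev i = 0 → w i = 0 := by
    intro i hi
    have hker : S *ᵥ ⇑(hH.eigenvectorBasis i) = 0 := by
      rw [hH.mulVec_eigenvectorBasis, ← hev, hi, zero_smul]
    have h0 : (⇑(hH.eigenvectorBasis i)) ⬝ᵥ Y = 0 := hY _ hker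
    rw [hw]
    have : (star U *ᵥ Y) i = (⇑(hH.eigenvectorBasis i)) ⬝ᵥ Y := by
      simp [Matrix.mulVec, dotProduct, hU, Matrix.star_apply]
    rw [this, h0]
  -- the continuous linear map z ↦ U *ᵥ z
  let g : (ι → ℝ) →L[ℝ] (ι → ℝ) := LinearMap.toContinuousLinearMap U.mulVecLin
  refine ⟨‖g‖ * ‖w‖, c, by positivity, hcpos, ?_⟩
  intro t ht
  -- diagonalize the exponential
  have hdiag : exp ((-t) • S) = U * Matrix.diagonal (fun i => Real.exp (-t * ev i)) * star U := by
    have h1 : (-t) • S = U * ((-t) • Matrix.diagonal ev) * U⁻¹ := by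
      rw [hUinv, hspec]
      rw [Matrix.mul_smul, Matrix.smul_mul]
    rw [h1, Matrix.exp_conj U ((-t) • Matrix.diagonal ev) hUunit, hUinv]
    congr 1
    rw [← Matrix.diagonal_smul, Matrix.exp_diagonal]
    congr 1
    funext i
    rw [Pi.exp_def]
    simp [Real.exp_eq_exp_ℝ]
  rw [hdiag]
  rw [← Matrix.mulVec_mulVec, ← Matrix.mulVec_mulVec, ← hw]
  have key : ∀ i, |(Matrix.diagonal (fun i => Real.exp (-t * ev i)) *ᵥ w) i|
      ≤ Real.exp (-c * t) * ‖w‖ := by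
    intro i
    rw [Matrix.mulVec_diagonal]
    rcases eq_or_lt_of_le (hevnn i) with h0 | hpos
    · have : w i = 0 := hwzero i h0.symm
      rw [this]
      simp only [mul_zero, abs_zero]
      positivity
    · have h1 : Real.exp (-t * ev i) ≤ Real.exp (-c * t) := by
        apply Real.exp_le_exp.mpr
        have := hcle i hpos
        nlinarith
      calc |Real.exp (-t * ev i) * w i| = Real.exp (-t * ev i) * |w i| := by
              rw [abs_mul, abs_of_pos (Real.exp_pos _)]
        _ ≤ Real.exp (-c * t) * ‖w‖ := by
              apply mul_le_mul h1 (norm_le_pi_norm w i) (abs_nonneg _)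
                (Real.exp_pos _).le
  have hDw : ‖Matrix.diagonal (fun i => Real.exp (-t * ev i)) *ᵥ w‖ ≤ Real.exp (-c * t) * ‖w‖ := by
    apply pi_norm_le_iff_of_nonneg (by positivity) |>.mpr
    intro i
    rw [Real.norm_eq_abs]
    exact key i
  calc ‖U *ᵥ (Matrix.diagonal (fun i => Real.exp (-t * ev i)) *ᵥ w)‖
      = ‖g (Matrix.diagonal (fun i => Real.exp (-t * ev i)) *ᵥ w)‖ := by
        simp [g]
    _ ≤ ‖g‖ * ‖Matrix.diagonal (fun i => Real.exp (-t * ev i)) *ᵥ w‖ := g.le_opNorm _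
    _ ≤ ‖g‖ * (Real.exp (-c * t) * ‖w‖) := by
        apply mul_le_mul_of_nonneg_left hDw (norm_nonneg _)
    _ = ‖g‖ * ‖w‖ * Real.exp (-c * t) := by ring
end Decay

section Kron
variable {m n : ℕ} (G : SimpleGraph (Fin m)) [DecidableRel G.Adj]

lemma kron_lap_mulVec (v : Fin m × Fin n → ℝ) (i : Fin m) (k : Fin n) :
    ((G.lapMatrix ℝ ⊗ₖ (1 : Matrix (Fin n) (Fin n) ℝ)) *ᵥ v) (i, k)
      = (G.lapMatrix ℝ *ᵥ fun j => v (j, k)) i := by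
  simp only [Matrix.mulVec, dotProduct, Matrix.kroneckerMap_apply]
  rw [Fintype.sum_prod_type]
  refine Finset.sum_congr rfl fun j _ => ?_
  rw [Finset.sum_eq_single k]
  · simp
  · intro l _ hl
    simp [Matrix.one_apply, Ne.symm hl]
  · simp

lemma kron_lap_posSemidef :
    ((G.lapMatrix ℝ ⊗ₖ (1 : Matrix (Fin n) (Fin n) ℝ))).PosSemidef := by
  rw [Matrix.posSemidef_iff_dotProduct_mulVec]
  constructor
  · show _ = _
    funext p q
    obtain ⟨i, k⟩ := p
    obtain ⟨j, l⟩ := q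
    simp only [conjTranspose_apply, kroneckerMap_apply, star_trivial]
    rw [(G.isSymm_lapMatrix (R := ℝ)).apply i j]
    by_cases h : k = l
    · subst h; rfl
    · rw [Matrix.one_apply_ne h, Matrix.one_apply_ne (Ne.symm h)]
  · intro x
    have hx : star x ⬝ᵥ ((G.lapMatrix ℝ ⊗ₖ (1 : Matrix (Fin n) (Fin n) ℝ)) *ᵥ x)
        = ∑ k : Fin n, (star fun j => x (j, k)) ⬝ᵥ (G.lapMatrix ℝ *ᵥ fun j => x (j, k)) := by
      simp only [dotProduct, star_trivial, Pi.star_apply]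
      rw [Fintype.sum_prod_type, Finset.sum_comm]
      refine Finset.sum_congr rfl fun k _ => Finset.sum_congr rfl fun i _ => ?_
      rw [kron_lap_mulVec]
    rw [hx]
    exact Finset.sum_nonneg fun k _ => (Matrix.posSemidef_iff_dotProduct_mulVec.mp (SimpleGraph.posSemidef_lapMatrix ℝ G)).2 _
end Kron

section Kron2
variable {m n : ℕ} (G : SimpleGraph (Fin m)) [DecidableRel G.Adj]

lemma kron_lap_mulVec_consensus (x : Fin n → ℝ) :
    (G.lapMatrix ℝ ⊗ₖ (1 : Matrix (Fin n) (Fin n) ℝ)) *ᵥ (fun p => x p.2) = 0 := by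
  funext p
  obtain ⟨i, k⟩ := p
  rw [kron_lap_mulVec]
  have h1 : (fun j : Fin m => (fun p : Fin m × Fin n => x p.2) (j, k)) = x k • (fun _ : Fin m => (1:ℝ)) := by
    funext j; simp
  rw [h1, Matrix.mulVec_smul, G.lapMatrix_mulVec_const_eq_zero]
  simp

lemma kron_lap_kernel (hG : G.Connected) (w : Fin m × Fin n → ℝ)
    (h : (G.lapMatrix ℝ ⊗ₖ (1 : Matrix (Fin n) (Fin n) ℝ)) *ᵥ w = 0)
    (i j : Fin m) (k : Fin n) : w (i, k) = w (j, k) := by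
  have hcol : Matrix.toLin' (G.lapMatrix ℝ) (fun j => w (j, k)) = 0 := by
    rw [Matrix.toLin'_apply]
    funext i'
    rw [← kron_lap_mulVec, h]
    rfl
  exact (G.lapMatrix_mulVec_eq_zero_iff_forall_reachable).mp hcol i j
    (hG.preconnected i j)
end Kron2

lemma mulVec_surjective_of_li_rows {m n : ℕ} (A : Matrix (Fin m) (Fin n) ℝ)
    (hA : LinearIndependent ℝ (fun i => A i)) :
    Function.Surjective (fun x => A *ᵥ x) := by
  have hinj : Function.Injective Aᵀ.mulVec := by
    rw [Matrix.mulVec_injective_iff]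
    exact hA
  have hrank : Aᵀ.rank = m := by
    rw [Matrix.rank]
    have : Function.Injective Aᵀ.mulVecLin := hinj
    rw [← LinearMap.ker_eq_bot] at this
    have h2 := LinearMap.finrank_range_add_finrank_ker (Aᵀ.mulVecLin)
    rw [this, finrank_bot, add_zero] at h2
    simpa using h2
  have hrankA : A.rank = m := by rw [← Matrix.rank_transpose]; exact hrank
  have htop : LinearMap.range A.mulVecLin = ⊤ := by
    apply Submodule.eq_top_of_finrank_eq
    rw [← Matrix.rank] at *
    simpa [hrankA] using rfl
  intro y
  have := LinearMap.range_eq_top.mp htop y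
  simpa using this

lemma exists_good_solution {m n : ℕ} (A : Matrix (Fin m) (Fin n) ℝ)
    (hA : LinearIndependent ℝ (fun i => A i)) (b : Fin m → ℝ) (v : Fin n → ℝ) (c : ℝ)
    (hc : c ≠ 0) :
    ∃ x : Fin n → ℝ, A *ᵥ x = b ∧ ∀ z : Fin n → ℝ, A *ᵥ z = 0 →
      z ⬝ᵥ (v - c • x) = 0 := by
  obtain ⟨x₀, hx₀⟩ := mulVec_surjective_of_li_rows A hA b
  have hx₀' : A *ᵥ x₀ = b := hx₀
  let f : EuclideanSpace ℝ (Fin n) →ₗ[ℝ] (Fin m → ℝ) :=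
    A.mulVecLin.comp (WithLp.linearEquiv 2 ℝ (Fin n → ℝ)).toLinearMap
  set K : Submodule ℝ (EuclideanSpace ℝ (Fin n)) := LinearMap.ker f with hK
  set d : EuclideanSpace ℝ (Fin n) :=
    (WithLp.equiv 2 (Fin n → ℝ)).symm (c⁻¹ • v - x₀) with hd
  haveI : CompleteSpace K := FiniteDimensional.complete ℝ K
  set p : EuclideanSpace ℝ (Fin n) := (K.orthogonalProjectionOnto d : EuclideanSpace ℝ (Fin n))
    with hp
  refine ⟨x₀ + (WithLp.equiv 2 (Fin n → ℝ)) p, ?_, ?_⟩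
  · have hpK : p ∈ K := (K.orthogonalProjectionOnto d).2
    have h0 : A *ᵥ (WithLp.equiv 2 (Fin n → ℝ)) p = 0 := hpK
    rw [Matrix.mulVec_add, hx₀', h0, add_zero]
  · intro z hz
    have hzK : (WithLp.equiv 2 (Fin n → ℝ)).symm z ∈ K := hz
    have horth : d - p ∈ Kᗮ := K.sub_starProjection_mem_orthogonal d
    have hinner : inner ℝ ((WithLp.equiv 2 (Fin n → ℝ)).symm z) (d - p) = (0 : ℝ) :=
      (Submodule.mem_orthogonal K (d - p)).mp horth _ hzK
    have key : ∀ i : Fin n,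
        (v - c • (x₀ + (WithLp.equiv 2 (Fin n → ℝ)) p)) i = c * ((d - p) i) := by
      intro i
      show v i - c * (x₀ i + p i) = c * ((c⁻¹ * v i - x₀ i) - p i)
      field_simp
      ring
    have hdot : z ⬝ᵥ (v - c • (x₀ + (WithLp.equiv 2 (Fin n → ℝ)) p))
        = c * inner ℝ ((WithLp.equiv 2 (Fin n → ℝ)).symm z) (d - p) := by
      rw [PiLp.inner_apply, dotProduct]
      simp only [key, RCLike.inner_apply, starRingEnd_apply, star_trivial]
      rw [Finset.mul_sum]
      exact Finset.sum_congr rfl fun i _ => by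
        show z i * (c * ((d - p) i)) = c * (((d - p) i) * z i)
        ring
    rw [hdot, hinner, mul_zero]


/-- For an `m × n` matrix `A` of full row rank, a connected graph `G` on `m`
vertices, and any initial vector `𝒳₀` with `aᵢᵀxᵢ(0) = bᵢ` for all `i`, the solution
`𝒳(t) = exp(-t·P L̄)·𝒳₀` of the flow `𝒳̇ = -P L̄ 𝒳` converges exponentially fast to `(x,…,x)`
for some solution `x` of `Ax = b`. -/
theorem flow_converges_exponentially_full_row_rank
    {m n : ℕ} (A : Matrix (Fin m) (Fin n) ℝ)
    (hA : LinearIndependent ℝ (fun i => A i)) (b : Fin m → ℝ)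
    (G : SimpleGraph (Fin m)) [DecidableRel G.Adj] (hG : G.Connected)
    (X0 : Fin m × Fin n → ℝ)
    (hX0 : ∀ i, A i ⬝ᵥ (fun k => X0 (i, k)) = b i) :
    ∃ x : Fin n → ℝ, A *ᵥ x = b ∧
      ∃ C c : ℝ, 0 ≤ C ∧ 0 < c ∧ ∀ t : ℝ, 0 ≤ t →
        ‖(NormedSpace.exp
              ((-t) • (blockP (fun i => A i) * (G.lapMatrix ℝ ⊗ₖ (1 : Matrix (Fin n) (Fin n) ℝ))))
            *ᵥ X0)
          - (fun p => x p.2)‖ ≤ C * Real.exp (-c * t) := by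
  rcases Nat.eq_zero_or_pos m with hm0 | hmpos
  · subst hm0
    refine ⟨0, funext fun i => i.elim0, 0, 1, le_refl 0, one_pos, fun t ht => ?_⟩
    have hz : (NormedSpace.exp
        ((-t) • (blockP (fun i => A i) * (G.lapMatrix ℝ ⊗ₖ (1 : Matrix (Fin n) (Fin n) ℝ))))
          *ᵥ X0) - (fun p => (0 : Fin n → ℝ) p.2) = 0 := by
      funext p
      exact p.1.elim0
    rw [hz, norm_zero, zero_mul]
  -- main case
  set a : Fin m → Fin n → ℝ := fun i => A i with ha_def
  have ha : ∀ i, a i ≠ 0 := fun i => hA.ne_zero i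
  set Lb : Matrix (Fin m × Fin n) (Fin m × Fin n) ℝ :=
    G.lapMatrix ℝ ⊗ₖ (1 : Matrix (Fin n) (Fin n) ℝ) with hLb
  set P : Matrix (Fin m × Fin n) (Fin m × Fin n) ℝ := blockP a with hP
  set M : Matrix (Fin m × Fin n) (Fin m × Fin n) ℝ := P * Lb with hM
  set S : Matrix (Fin m × Fin n) (Fin m × Fin n) ℝ := P * Lb * P with hS
  have hmne : ((m : ℝ)) ≠ 0 := Nat.cast_ne_zero.mpr hmpos.ne'
  -- choose the limit point x
  obtain ⟨x, hxb, hxorth⟩ := exists_good_solution A hA b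
    (fun k => ∑ i : Fin m, X0 (i, k)) (m : ℝ) hmne
  set xbar : Fin m × Fin n → ℝ := fun p => x p.2 with hxbar
  set Y : Fin m × Fin n → ℝ := X0 - xbar with hY
  have hYrow : ∀ i, a i ⬝ᵥ (fun k => Y (i, k)) = 0 := by
    intro i
    have h1 : (fun k => Y (i, k)) = (fun k => X0 (i, k)) - x := by
      funext k; simp [hY, hxbar]
    rw [h1, dotProduct_sub, hX0 i]
    have : a i ⬝ᵥ x = (A *ᵥ x) i := rfl
    rw [this, hxb, sub_self]
  have hPY : P *ᵥ Y = Y := blockP_fixed a Y hYrow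
  -- P is symmetric
  have hPH : Pᴴ = P := blockP_conjTranspose a
  -- S is positive semidefinite
  have hSpsd : S.PosSemidef := by
    have := (kron_lap_posSemidef (n := n) G).mul_mul_conjTranspose_same P
    rwa [hPH] at this
  -- the fixed point is fixed
  have hMxbar : M *ᵥ xbar = 0 := by
    rw [hM, ← Matrix.mulVec_mulVec, hLb, kron_lap_mulVec_consensus G x, Matrix.mulVec_zero]
  -- M and S agree on Y, in all powers
  have step : ∀ Z : Fin m × Fin n → ℝ, P *ᵥ Z = Z →
      (P * Lb) *ᵥ Z = (P * Lb * P) *ᵥ Z ∧ P *ᵥ ((P * Lb * P) *ᵥ Z) = (P * Lb * P) *ᵥ Z := by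
    intro Z hZ
    have e1 : (P * Lb * P) *ᵥ Z = (P * Lb) *ᵥ Z := by
      rw [← Matrix.mulVec_mulVec Z (P * Lb) P, hZ]
    refine ⟨e1.symm, ?_⟩
    rw [e1, ← Matrix.mulVec_mulVec Z P Lb]
    exact blockP_idem a ha _
  have hpow : ∀ k : ℕ, M ^ k *ᵥ Y = S ^ k *ᵥ Y ∧ P *ᵥ (S ^ k *ᵥ Y) = S ^ k *ᵥ Y := by
    intro k
    induction k with
    | zero => exact ⟨by simp, by simpa using hPY⟩
    | succ k ih =>
      obtain ⟨ih1, ih2⟩ := ih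
      have h1 := step (S ^ k *ᵥ Y) ih2
      refine ⟨?_, ?_⟩
      · rw [pow_succ', pow_succ', ← Matrix.mulVec_mulVec Y M (M ^ k),
          ← Matrix.mulVec_mulVec Y S (S ^ k), ih1]
        exact h1.1
      · rw [pow_succ', ← Matrix.mulVec_mulVec Y S (S ^ k)]
        exact h1.2
  -- orthogonality of Y to the kernel of S
  have hYorth : ∀ Z : Fin m × Fin n → ℝ, S *ᵥ Z = 0 → Z ⬝ᵥ Y = 0 := by
    intro Z hz
    have hswap : ∀ w : Fin m × Fin n → ℝ, Z ⬝ᵥ (P *ᵥ w) = (P *ᵥ Z) ⬝ᵥ w := by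
      intro w
      rw [Matrix.dotProduct_mulVec, ← Matrix.mulVec_transpose]
      have hPT : Pᵀ = P := by
        have := hPH
        rwa [Matrix.conjTranspose_eq_transpose_of_trivial] at this
      rw [hPT]
    -- L̄ (P Z) = 0
    have hLPZ : Lb *ᵥ (P *ᵥ Z) = 0 := by
      have h0 : (P *ᵥ Z) ⬝ᵥ (Lb *ᵥ (P *ᵥ Z)) = 0 := by
        have h1 : Z ⬝ᵥ (S *ᵥ Z) = 0 := by rw [hz, dotProduct_zero]
        rw [hS, ← Matrix.mulVec_mulVec, ← Matrix.mulVec_mulVec, hswap] at h1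
        exact h1
      have h2 := (kron_lap_posSemidef (n := n) G).dotProduct_mulVec_zero_iff (P *ᵥ Z)
      rw [hLb]
      apply h2.mp
      simpa using h0
    -- consensus structure of P Z
    set z : Fin n → ℝ := fun k => (P *ᵥ Z) (⟨0, hmpos⟩, k) with hzdef
    have hcons : ∀ i k, (P *ᵥ Z) (i, k) = z k := by
      intro i k
      exact kron_lap_kernel G hG (P *ᵥ Z) hLPZ i ⟨0, hmpos⟩ k
    have hAz : A *ᵥ z = 0 := by
      funext i
      have h3 : (A *ᵥ z) i = a i ⬝ᵥ z := rfl
      have h4 : z = fun k => (P *ᵥ Z) (i, k) := by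
        funext k; rw [hcons i k]
      rw [h3, h4]
      have := blockP_dot a ha Z i
      simpa [hP] using this
    -- conclude
    have h5 : Z ⬝ᵥ Y = (P *ᵥ Z) ⬝ᵥ Y := by rw [← hPY, hswap, hPY]
    rw [h5]
    have h6 : (P *ᵥ Z) ⬝ᵥ Y
        = z ⬝ᵥ ((fun k => ∑ i : Fin m, X0 (i, k)) - (m : ℝ) • x) := by
      rw [dotProduct, dotProduct]
      rw [Fintype.sum_prod_type, Finset.sum_comm]
      refine Finset.sum_congr rfl fun k _ => ?_
      have : ∀ i : Fin m, (P *ᵥ Z) (i, k) * Y (i, k) = z k * Y (i, k) := by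
        intro i; rw [hcons i k]
      rw [Finset.sum_congr rfl fun i _ => this i, ← Finset.mul_sum]
      have h7 : ∑ i : Fin m, Y (i, k)
          = ((fun k => ∑ i : Fin m, X0 (i, k)) - (m : ℝ) • x) k := by
        simp [hY, hxbar, Finset.sum_sub_distrib, mul_comm]
      rw [h7]
    rw [h6]
    exact hxorth z hAz
  -- the decay estimate
  obtain ⟨C, c, hC, hc, hdecay⟩ := psd_exp_decay S hSpsd Y hYorth
  refine ⟨x, hxb, C, c, hC, hc, fun t ht => ?_⟩
  have hkey : (NormedSpace.exp ((-t) • M) *ᵥ X0) - xbar = NormedSpace.exp ((-t) • S) *ᵥ Y := by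
    have hX0split : X0 = Y + xbar := by
      funext p; simp [hY]
    have hexpxbar : NormedSpace.exp ((-t) • M) *ᵥ xbar = xbar := by
      apply exp_mulVec_eq_self
      rw [Matrix.smul_mulVec, hMxbar, smul_zero]
    have hexpY : NormedSpace.exp ((-t) • M) *ᵥ Y = NormedSpace.exp ((-t) • S) *ᵥ Y := by
      apply exp_mulVec_congr
      intro k
      rw [smul_pow, smul_pow, Matrix.smul_mulVec, Matrix.smul_mulVec,
        (hpow k).1]
    rw [hX0split, Matrix.mulVec_add, hexpxbar, add_sub_cancel_right, hexpY]
  calc ‖(NormedSpace.exp ((-t) • M) *ᵥ X0) - xbar‖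
      = ‖NormedSpace.exp ((-t) • S) *ᵥ Y‖ := by rw [hkey]
    _ ≤ C * Real.exp (-c * t) := hdecay t ht
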